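/- Let n ≥ 1, let Ω ⊆ Ω' ⊆ ℝⁿ with Ω' open and bounded, and let ε, λ, μ > 0. For t > 0 set Ω^t = {x ∈ ℝⁿ : dist(x, Ω) < t}. Let f, g : ℝⁿ → ℝ be continuously differentiable, vanishing outside Ω', with ∫_{ℝⁿ} f² = ∫_{ℝⁿ} g² = 1, ∫_{ℝⁿ} fg = 0, ∫_{ℝⁿ} ‖∇f‖² ≤ λ, and ∫_{ℝⁿ} ‖∇g‖² ≤ λ. Let η : ℝⁿ → ℝ satisfy 0 ≤ η ≤ 1, η = 1 on Ω^ε, and η = 0 outside Ω^{2ε}. Let χ : ℝⁿ → ℝ be differentiable with 0 ≤ χ ≤ 1, ‖∇χ(x)‖ ≤ 1/ε for all x, χ = 0 on Ω, and χ = 1 outside Ω^ε. If μ ∫_{ℝⁿ} (χf)² ≤ ∫_{ℝⁿ} ‖∇(χf)‖² and μ ∫_{ℝⁿ} (χg)² ≤ ∫_{ℝⁿ} ‖∇(χg)‖², then |∫_{ℝⁿ} η² f g| ≤ 16 (1 + ε²λ)/(ε²μ). -/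

import Mathlib

open MeasureTheory

lemma norm_gradient_eq' {n : ℕ} (f : EuclideanSpace ℝ (Fin n) → ℝ) (x) :
    ‖gradient f x‖ = ‖fderiv ℝ f x‖ := by
  rw [gradient]; exact LinearIsometryEquiv.norm_map _ _

lemma grad_mul_le' {n : ℕ} (χ f : EuclideanSpace ℝ (Fin n) → ℝ) (x)
    (hχ : DifferentiableAt ℝ χ x) (hf : DifferentiableAt ℝ f x) :
    ‖gradient (fun y => χ y * f y) x‖ ≤
      |f x| * ‖gradient χ x‖ + |χ x| * ‖gradient f x‖ := by
  rw [norm_gradient_eq', norm_gradient_eq', norm_gradient_eq', fderiv_fun_mul hχ hf]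
  refine (norm_add_le _ _).trans ?_
  rw [norm_smul, norm_smul]
  simp [Real.norm_eq_abs]
  exact le_of_eq (by ring)


set_option maxHeartbeats 1000000 in
/-- Off-diagonal case of Lemma 2.3: `|∫ η² f g| ≤ 16(1+ε²λ)/(ε²μ)` for two
orthonormal eigenfunction-like test functions f, g. -/
theorem stmt4 (n : ℕ) (hn : 1 ≤ n)
    (Ω Ω' : Set (EuclideanSpace ℝ (Fin n)))
    (hsub : Ω ⊆ Ω') (hopen : IsOpen Ω') (hbdd : Bornology.IsBounded Ω')
    (ε lam μ : ℝ) (hε : 0 < ε) (hlam : 0 < lam) (hμ : 0 < μ)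
    (f g η χ : EuclideanSpace ℝ (Fin n) → ℝ)
    (hf : ContDiff ℝ 1 f) (hf0 : ∀ x ∉ Ω', f x = 0)
    (hg : ContDiff ℝ 1 g) (hg0 : ∀ x ∉ Ω', g x = 0)
    (hfL2 : ∫ x, (f x) ^ 2 = 1)
    (hgL2 : ∫ x, (g x) ^ 2 = 1)
    (hfg : ∫ x, f x * g x = 0)
    (hfD : ∫ x, ‖gradient f x‖ ^ 2 ≤ lam)
    (hgD : ∫ x, ‖gradient g x‖ ^ 2 ≤ lam)
    (hη0 : ∀ x, 0 ≤ η x) (hη1 : ∀ x, η x ≤ 1)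
    (hηeq1 : ∀ x, Metric.infDist x Ω < ε → η x = 1)
    (hηeq0 : ∀ x, ¬ Metric.infDist x Ω < 2 * ε → η x = 0)
    (hχd : Differentiable ℝ χ)
    (hχ0 : ∀ x, 0 ≤ χ x) (hχ1 : ∀ x, χ x ≤ 1)
    (hχg : ∀ x, ‖gradient χ x‖ ≤ 1 / ε)
    (hχΩ : ∀ x ∈ Ω, χ x = 0)
    (hχ1out : ∀ x, ¬ Metric.infDist x Ω < ε → χ x = 1)
    (hvarf : μ * ∫ x, (χ x * f x) ^ 2 ≤
      ∫ x, ‖gradient (fun y => χ y * f y) x‖ ^ 2)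
    (hvarg : μ * ∫ x, (χ x * g x) ^ 2 ≤
      ∫ x, ‖gradient (fun y => χ y * g y) x‖ ^ 2) :
    |∫ x, (η x) ^ 2 * f x * g x| ≤ 16 * (1 + ε ^ 2 * lam) / (ε ^ 2 * μ) := by
  have hK : IsCompact (closure Ω') := hbdd.isCompact_closure
  have hχc : Continuous χ := hχd.continuous
  -- general bound for one function
  have key : ∀ F : EuclideanSpace ℝ (Fin n) → ℝ, ContDiff ℝ 1 F →
      (∀ x ∉ Ω', F x = 0) → (∫ x, (F x) ^ 2 = 1) →
      (∫ x, ‖gradient F x‖ ^ 2 ≤ lam) →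
      (μ * ∫ x, (χ x * F x) ^ 2 ≤ ∫ x, ‖gradient (fun y => χ y * F y) x‖ ^ 2) →
      ∫ x, (χ x * F x) ^ 2 ≤ 2 * (1 + ε ^ 2 * lam) / (ε ^ 2 * μ) := by
    intro F hF hF0 hFL2 hFD hvar
    have hFc : Continuous F := hF.continuous
    have hF0' : ∀ x ∉ closure Ω', F x = 0 := fun x hx =>
      hF0 x (fun h => hx (subset_closure h))
    have hgrad0 : ∀ x ∉ closure Ω', gradient F x = 0 := by
      intro x hx
      have hev : F =ᶠ[nhds x] (fun _ => (0 : ℝ)) := by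
        filter_upwards [isClosed_closure.isOpen_compl.mem_nhds hx] with y hy
        exact hF0' y hy
      rw [hev.gradient_eq, gradient_fun_const]
    have hgradc : Continuous (fun x => gradient F x) := by
      have := hF.continuous_fderiv one_ne_zero
      exact ((InnerProductSpace.toDual ℝ _).symm.continuous).comp this
    have intF2 : Integrable (fun x => (F x) ^ 2) :=
      (hFc.pow 2).integrable_of_hasCompactSupport
        (HasCompactSupport.intro hK (fun x hx => by simp only [Pi.pow_apply, Pi.mul_apply]; rw [hF0' x hx]; ring))
    have intgrad : Integrable (fun x => ‖gradient F x‖ ^ 2) :=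
      ((hgradc.norm).pow 2).integrable_of_hasCompactSupport
        (HasCompactSupport.intro hK (fun x hx => by simp only [Pi.pow_apply, Pi.mul_apply]; rw [hgrad0 x hx]; simp))
    have hGint : Integrable (fun x => 2 / ε ^ 2 * (F x) ^ 2 + 2 * ‖gradient F x‖ ^ 2) :=
      (intF2.const_mul _).add (intgrad.const_mul _)
    have hptw : ∀ x, ‖gradient (fun y => χ y * F y) x‖ ^ 2 ≤
        2 / ε ^ 2 * (F x) ^ 2 + 2 * ‖gradient F x‖ ^ 2 := by
      intro x
      have h1 := grad_mul_le' χ F x (hχd x) (hF.differentiable one_ne_zero x)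
      have h2 : |F x| * ‖gradient χ x‖ + |χ x| * ‖gradient F x‖ ≤
          |F x| * (1 / ε) + 1 * ‖gradient F x‖ := by
        refine add_le_add (mul_le_mul_of_nonneg_left (hχg x) (abs_nonneg _))
          (mul_le_mul_of_nonneg_right ?_ (norm_nonneg _))
        rw [abs_of_nonneg (hχ0 x)]; exact hχ1 x
      have hb := h1.trans h2
      have hsq := pow_le_pow_left₀ (norm_nonneg _) hb 2
      calc ‖gradient (fun y => χ y * F y) x‖ ^ 2
          ≤ (|F x| * (1 / ε) + 1 * ‖gradient F x‖) ^ 2 := hsq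
        _ ≤ 2 * (|F x| * (1 / ε)) ^ 2 + 2 * (1 * ‖gradient F x‖) ^ 2 := by
            nlinarith [sq_nonneg (|F x| * (1 / ε) - 1 * ‖gradient F x‖)]
        _ = 2 / ε ^ 2 * (F x) ^ 2 + 2 * ‖gradient F x‖ ^ 2 := by
            rw [mul_pow, sq_abs, one_mul]
            field_simp
    have hup : ∫ x, ‖gradient (fun y => χ y * F y) x‖ ^ 2 ≤
        ∫ x, (2 / ε ^ 2 * (F x) ^ 2 + 2 * ‖gradient F x‖ ^ 2) :=
      integral_mono_of_nonneg (ae_of_all _ fun x => sq_nonneg _) hGint (ae_of_all _ hptw)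
    have e1 : ∫ x, (2 / ε ^ 2 * (F x) ^ 2 + 2 * ‖gradient F x‖ ^ 2) =
        (∫ x, 2 / ε ^ 2 * (F x) ^ 2) + ∫ x, 2 * ‖gradient F x‖ ^ 2 :=
      integral_add (intF2.const_mul _) (intgrad.const_mul _)
    have e2 : ∫ x, 2 / ε ^ 2 * (F x) ^ 2 = 2 / ε ^ 2 := by
      rw [integral_const_mul]
      simp only [hFL2, mul_one]
    have e3 : ∫ x, 2 * ‖gradient F x‖ ^ 2 ≤ 2 * lam := by
      rw [integral_const_mul]
      nlinarith [hFD]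
    have hfinal : μ * ∫ x, (χ x * F x) ^ 2 ≤ 2 / ε ^ 2 + 2 * lam := by
      have h := (hvar.trans hup).trans_eq e1
      rw [e2] at h
      linarith
    rw [le_div_iff₀ (by positivity)]
    have hε2 : (0:ℝ) < ε ^ 2 := by positivity
    have := mul_le_mul_of_nonneg_right hfinal (le_of_lt hε2)
    have h2ε : 2 / ε ^ 2 * ε ^ 2 = 2 := by field_simp
    nlinarith [this]
  have hA := key f hf hf0 hfL2 hfD hvarf
  have hB := key g hg hg0 hgL2 hgD hvarg
  -- integrability of products
  have hfc : Continuous f := hf.continuous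
  have hgc : Continuous g := hg.continuous
  have hf0' : ∀ x ∉ closure Ω', f x = 0 := fun x hx => hf0 x (fun h => hx (subset_closure h))
  have intfg : Integrable (fun x => f x * g x) :=
    (hfc.mul hgc).integrable_of_hasCompactSupport
      (HasCompactSupport.intro hK (fun x hx => by simp only [Pi.pow_apply, Pi.mul_apply]; rw [hf0' x hx]; ring))
  have intχf2 : Integrable (fun x => (χ x * f x) ^ 2) :=
    ((hχc.mul hfc).pow 2).integrable_of_hasCompactSupport
      (HasCompactSupport.intro hK (fun x hx => by simp only [Pi.pow_apply, Pi.mul_apply]; rw [hf0' x hx]; ring))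
  have intχg2 : Integrable (fun x => (χ x * g x) ^ 2) :=
    ((hχc.mul hgc).pow 2).integrable_of_hasCompactSupport
      (HasCompactSupport.intro hK (fun x hx => by
        simp only [Pi.pow_apply, Pi.mul_apply]; rw [hg0 x (fun h => hx (subset_closure h))]; ring))
  have hRHSpos : (0:ℝ) ≤ 16 * (1 + ε ^ 2 * lam) / (ε ^ 2 * μ) := by positivity
  by_cases hInt : Integrable (fun x => (η x) ^ 2 * f x * g x) volume
  · have hsplit : ∫ x, (η x) ^ 2 * f x * g x =
        ∫ x, ((η x) ^ 2 * f x * g x - f x * g x) := by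
      rw [integral_sub hInt intfg, hfg, sub_zero]
    rw [hsplit]
    have hptw2 : ∀ x, |(η x) ^ 2 * f x * g x - f x * g x| ≤
        ((χ x * f x) ^ 2 + (χ x * g x) ^ 2) / 2 := by
      intro x
      by_cases hx : Metric.infDist x Ω < ε
      · rw [hηeq1 x hx]; simp; positivity
      · rw [hχ1out x hx]
        have hη := hη0 x
        have hη' := hη1 x
        have habs : |(η x) ^ 2 * f x * g x - f x * g x| =
            |(η x) ^ 2 - 1| * |f x * g x| := by
          rw [← abs_mul]; ring_nf
        have h1 : |(η x) ^ 2 - 1| ≤ 1 := by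
          rw [abs_le]; constructor <;> nlinarith
        calc |(η x) ^ 2 * f x * g x - f x * g x|
            ≤ 1 * |f x * g x| := by
              rw [habs]; exact mul_le_mul_of_nonneg_right h1 (abs_nonneg _)
          _ ≤ ((1 * f x) ^ 2 + (1 * g x) ^ 2) / 2 := by
              rw [one_mul, abs_mul]
              nlinarith [sq_nonneg (|f x| - |g x|), sq_abs (f x), sq_abs (g x)]
    have h1 : |∫ x, ((η x) ^ 2 * f x * g x - f x * g x)| ≤
        ∫ x, |((η x) ^ 2 * f x * g x - f x * g x)| := by
      simpa [Real.norm_eq_abs] using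
        norm_integral_le_integral_norm (fun x => ((η x) ^ 2 * f x * g x - f x * g x))
    refine h1.trans ?_
    have h2 : ∫ x, |((η x) ^ 2 * f x * g x - f x * g x)| ≤
        ∫ x, ((χ x * f x) ^ 2 + (χ x * g x) ^ 2) / 2 :=
      integral_mono_of_nonneg (ae_of_all _ fun x => abs_nonneg _)
        ((intχf2.add intχg2).div_const 2) (ae_of_all _ hptw2)
    refine h2.trans ?_
    have heq2 : ∫ x, ((χ x * f x) ^ 2 + (χ x * g x) ^ 2) / 2 =
        ((∫ x, (χ x * f x) ^ 2) + ∫ x, (χ x * g x) ^ 2) / 2 := by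
      rw [integral_div, integral_add intχf2 intχg2]
    rw [heq2]
    have hC : 2 * (1 + ε ^ 2 * lam) / (ε ^ 2 * μ) ≤ 16 * (1 + ε ^ 2 * lam) / (ε ^ 2 * μ) := by
      have hXpos : (0:ℝ) < 1 + ε ^ 2 * lam := by positivity
      have hDpos : (0:ℝ) < ε ^ 2 * μ := by positivity
      rw [div_le_div_iff₀ hDpos hDpos]
      nlinarith
    linarith
  · rw [integral_undef hInt]
    simpa using hRHSpos
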